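/- Fix d ∈ {3,4}, set ℓ = d/(d-2), and let c > 0. Then: (a) for every ξ ≥ 0 there is a unique number Q(ξ) ∈ (0, 1/d] with c·ξ^{2ℓ} = (1 − d·Q(ξ))/Q(ξ)^ℓ; (b) Q(0) = 1/d; (c) the resulting function Q is differentiable on (0,∞) with Q'(ξ) < 0 for every ξ > 0 (so Q is strictly decreasing and 0 < Q(ξ) < 1/d for ξ > 0); (d) Q(ξ) → 0 as ξ → ∞; and (e) Q solves the profile ODE d·Q(ξ)·(Q(ξ) − 1/d) + (Q(ξ) − 1/2)·ξ·Q'(ξ) = 0 for all ξ > 0. -/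

import Mathlib

open Filter Set


theorem aux_profile (d ℓ : ℕ) (hd3 : (3:ℝ) ≤ (d:ℝ)) (hℓ1 : 1 ≤ ℓ)
    (hde : (ℓ:ℝ) * ((d:ℝ) - 2) = (d:ℝ)) (c : ℝ) (hc : 0 < c) :
    (∀ ξ : ℝ, 0 ≤ ξ → ∃! q : ℝ,
      q ∈ Set.Ioc 0 (1 / (d : ℝ)) ∧ c * ξ ^ (2 * ℓ) = (1 - (d : ℝ) * q) / q ^ ℓ) ∧
    (∀ Q : ℝ → ℝ,
      (∀ ξ : ℝ, 0 ≤ ξ → Q ξ ∈ Set.Ioc 0 (1 / (d : ℝ)) ∧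
        c * ξ ^ (2 * ℓ) = (1 - (d : ℝ) * Q ξ) / Q ξ ^ ℓ) →
      Q 0 = 1 / (d : ℝ) ∧
      (∀ ξ : ℝ, 0 < ξ → DifferentiableAt ℝ Q ξ ∧ deriv Q ξ < 0) ∧
      (∀ ξ : ℝ, 0 < ξ → 0 < Q ξ ∧ Q ξ < 1 / (d : ℝ)) ∧
      Tendsto Q atTop (nhds 0) ∧
      (∀ ξ : ℝ, 0 < ξ →
        (d : ℝ) * Q ξ * (Q ξ - 1 / (d : ℝ)) + (Q ξ - 1 / 2) * ξ * deriv Q ξ = 0)) := by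
  have hD0 : (0:ℝ) < (d:ℝ) := by linarith
  have hL1 : (1:ℝ) ≤ (ℓ:ℝ) := by exact_mod_cast hℓ1
  have hL0 : (0:ℝ) < (ℓ:ℝ) := by linarith
  have hℓ0 : ℓ ≠ 0 := by omega
  have h2ℓ : 2 * ℓ ≠ 0 := by omega
  -- strict antitonicity of q ↦ (1 - d q)/q^ℓ
  have hanti : ∀ a b : ℝ, a ∈ Set.Ioc 0 (1/(d:ℝ)) → b ∈ Set.Ioc 0 (1/(d:ℝ)) → a < b →
      (1 - (d:ℝ)*b)/b^ℓ < (1 - (d:ℝ)*a)/a^ℓ := by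
    rintro a b ⟨ha0, ha1⟩ ⟨hb0, hb1⟩ hab
    have hpa : 0 < a^ℓ := pow_pos ha0 ℓ
    have hpb : 0 < b^ℓ := pow_pos hb0 ℓ
    rw [div_lt_div_iff₀ hpb hpa]
    have h1 : b * (d:ℝ) ≤ 1 := (le_div_iff₀ hD0).mp hb1
    have h2 : a * (d:ℝ) < 1 := (lt_div_iff₀ hD0).mp (lt_of_lt_of_le hab hb1)
    have hple : a^ℓ < b^ℓ := pow_lt_pow_left₀ hab ha0.le hℓ0
    have k1 : (1 - (d:ℝ)*b)*a^ℓ ≤ (1 - (d:ℝ)*b)*b^ℓ :=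
      mul_le_mul_of_nonneg_left hple.le (by linarith)
    have k2 : (1 - (d:ℝ)*b)*b^ℓ < (1 - (d:ℝ)*a)*b^ℓ :=
      mul_lt_mul_of_pos_right (by nlinarith) hpb
    linarith
  -- existence of a preimage for each y ≥ 0
  have hexu : ∀ y : ℝ, 0 ≤ y → ∃ q ∈ Set.Ioc 0 (1/(d:ℝ)), (1 - (d:ℝ)*q)/q^ℓ = y := by
    intro y hy
    set g : ℝ → ℝ := fun q => y*q^ℓ + (d:ℝ)*q - 1 with hg
    have hg0 : g 0 = -1 := by simp [hg, zero_pow hℓ0]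
    have hg1 : 0 ≤ g (1/(d:ℝ)) := by
      have : (d:ℝ) * (1/(d:ℝ)) = 1 := mul_one_div_cancel hD0.ne'
      simp only [hg]
      rw [this]
      have : 0 ≤ y * (1/(d:ℝ))^ℓ := by positivity
      linarith
    have hcont : ContinuousOn g (Set.Icc 0 (1/(d:ℝ))) := by
      apply Continuous.continuousOn; fun_prop
    have hmem : (0:ℝ) ∈ Set.Icc (g 0) (g (1/(d:ℝ))) := by
      rw [hg0]; exact ⟨by norm_num, hg1⟩
    obtain ⟨q, hqmem, hgq⟩ := intermediate_value_Icc (by positivity : (0:ℝ) ≤ 1/(d:ℝ)) hcont hmem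
    have hq0 : 0 < q := by
      rcases eq_or_lt_of_le hqmem.1 with h | h
      · exfalso; rw [← h, hg0] at hgq; norm_num at hgq
      · exact h
    refine ⟨q, ⟨hq0, hqmem.2⟩, ?_⟩
    rw [div_eq_iff (pow_pos hq0 ℓ).ne']
    have : y*q^ℓ + (d:ℝ)*q - 1 = 0 := hgq
    linarith
  -- part (a)
  have parta : ∀ ξ : ℝ, 0 ≤ ξ → ∃! q : ℝ,
      q ∈ Set.Ioc 0 (1 / (d : ℝ)) ∧ c * ξ ^ (2 * ℓ) = (1 - (d : ℝ) * q) / q ^ ℓ := by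
    intro ξ hξ
    have hy : 0 ≤ c * ξ^(2*ℓ) := by positivity
    obtain ⟨q, hqm, hq⟩ := hexu _ hy
    refine ⟨q, ⟨hqm, hq.symm⟩, ?_⟩
    rintro q' ⟨hq'm, hq'⟩
    by_contra hne
    rcases lt_or_gt_of_ne hne with h | h
    · have hlt := hanti q' q hq'm hqm h
      rw [hq, ← hq'] at hlt
      exact lt_irrefl _ hlt
    · have hlt := hanti q q' hqm hq'm h
      rw [hq, ← hq'] at hlt
      exact lt_irrefl _ hlt
  refine ⟨parta, ?_⟩
  intro Q hQ
  have hQpos : ∀ ξ : ℝ, 0 ≤ ξ → 0 < Q ξ := fun ξ hξ => (hQ ξ hξ).1.1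
  have hQle : ∀ ξ : ℝ, 0 ≤ ξ → Q ξ ≤ 1/(d:ℝ) := fun ξ hξ => (hQ ξ hξ).1.2
  have hQeq : ∀ ξ : ℝ, 0 ≤ ξ → c * ξ^(2*ℓ) = (1 - (d:ℝ)*Q ξ)/Q ξ^ℓ := fun ξ hξ => (hQ ξ hξ).2
  have hQrel : ∀ ξ : ℝ, 0 ≤ ξ → c * ξ^(2*ℓ) * Q ξ^ℓ = 1 - (d:ℝ) * Q ξ := by
    intro ξ hξ
    have h := hQeq ξ hξ
    rw [eq_div_iff (pow_pos (hQpos ξ hξ) ℓ).ne'] at h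
    exact h
  -- (b)
  have hb : Q 0 = 1/(d:ℝ) := by
    have h := hQrel 0 le_rfl
    rw [zero_pow h2ℓ] at h
    rw [eq_div_iff hD0.ne']
    nlinarith
  -- strict antitonicity of Q
  have hQanti : ∀ a b : ℝ, 0 ≤ a → a < b → Q b < Q a := by
    intro a b ha hab
    have hb' : (0:ℝ) ≤ b := le_trans ha hab.le
    by_contra hcon
    push_neg at hcon
    have hlt : c * a^(2*ℓ) < c * b^(2*ℓ) :=
      (mul_lt_mul_iff_right₀ hc).2 (pow_lt_pow_left₀ hab ha h2ℓ)
    rcases eq_or_lt_of_le hcon with heq | hlt2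
    · rw [hQeq a ha, hQeq b hb', heq] at hlt
      exact lt_irrefl _ hlt
    · have h := hanti (Q a) (Q b) (hQ a ha).1 (hQ b hb').1 hlt2
      rw [← hQeq a ha, ← hQeq b hb'] at h
      linarith
  -- (c2)
  have hrange : ∀ ξ : ℝ, 0 < ξ → 0 < Q ξ ∧ Q ξ < 1/(d:ℝ) := by
    intro ξ hξ
    exact ⟨hQpos ξ hξ.le, hb ▸ hQanti 0 ξ le_rfl hξ⟩
  -- surjectivity of Q onto Ioc 0 (1/d)
  have hsurj : ∀ y : ℝ, y ∈ Set.Ioc 0 (1/(d:ℝ)) → ∃ ξ : ℝ, 0 ≤ ξ ∧ Q ξ = y := by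
    rintro y ⟨hy0, hy1⟩
    have hnum : 0 ≤ 1 - (d:ℝ)*y := by
      have := (le_div_iff₀ hD0).mp hy1
      linarith
    set x := (1 - (d:ℝ)*y)/y^ℓ with hxdef
    have hx0 : 0 ≤ x := div_nonneg hnum (pow_pos hy0 ℓ).le
    set ξ := (x/c) ^ (((2*ℓ : ℕ) : ℝ))⁻¹ with hξdef
    have hξ0 : 0 ≤ ξ := Real.rpow_nonneg (by positivity) _
    have hpow : ξ ^ (2*ℓ) = x / c :=
      Real.rpow_inv_natCast_pow (by positivity) h2ℓ
    have hcx : c * ξ^(2*ℓ) = x := by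
      rw [hpow]; field_simp
    obtain ⟨q, _, huniq⟩ := parta ξ hξ0
    have h1 : Q ξ = q := huniq _ ⟨(hQ ξ hξ0).1, hQeq ξ hξ0⟩
    have h2 : y = q := huniq y ⟨⟨hy0, hy1⟩, by rw [hcx]⟩
    exact ⟨ξ, hξ0, by rw [h1, h2]⟩
  -- continuity of Q on (0, ∞)
  have hQcont : ∀ ξ0 : ℝ, 0 < ξ0 → ContinuousAt Q ξ0 := by
    intro ξ0 hξ0
    have hmono : StrictMonoOn (fun ξ => -Q ξ) (Set.Ioi (0:ℝ)) := by
      intro a ha b hb hab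
      have := hQanti a b (le_of_lt ha) hab
      simp only [neg_lt_neg_iff]
      linarith
    have himg : (fun ξ => -Q ξ) '' (Set.Ioi (0:ℝ)) ∈ nhds (-Q ξ0) := by
      have hsub : Set.Ioo (-(1/(d:ℝ))) 0 ⊆ (fun ξ => -Q ξ) '' Set.Ioi (0:ℝ) := by
        rintro z ⟨hz1, hz2⟩
        obtain ⟨ξ, hξ, hQξ⟩ := hsurj (-z) ⟨by linarith, by linarith⟩
        have hξpos : 0 < ξ := by
          rcases eq_or_lt_of_le hξ with h | h
          · exfalso
            rw [← h, hb] at hQξ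
            linarith
          · exact h
        exact ⟨ξ, hξpos, by dsimp; rw [hQξ]; ring⟩
      have hzmem : -Q ξ0 ∈ Set.Ioo (-(1/(d:ℝ))) 0 := by
        obtain ⟨h1, h2⟩ := hrange ξ0 hξ0
        exact ⟨by linarith, by linarith⟩
      exact Filter.mem_of_superset (isOpen_Ioo.mem_nhds hzmem) hsub
    have hc1 : ContinuousAt (fun ξ => -Q ξ) ξ0 :=
      hmono.continuousAt_of_image_mem_nhds (Ioi_mem_nhds hξ0) himg
    have h3 : ContinuousAt (fun ξ => -(-Q ξ)) ξ0 := hc1.neg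
    simpa using h3
  -- differentiability of Q on (0, ∞)
  have hdiff : ∀ ξ0 : ℝ, 0 < ξ0 → DifferentiableAt ℝ Q ξ0 := by
    intro ξ0 hξ0
    obtain ⟨hq0pos, hq0lt⟩ := hrange ξ0 hξ0
    set f : ℝ → ℝ := fun q => (1 - (d:ℝ)*q)/q^ℓ with hf
    set f' : ℝ := (-(d:ℝ) * Q ξ0^ℓ - (1 - (d:ℝ)*Q ξ0) * ((ℓ:ℝ) * Q ξ0^(ℓ-1))) / (Q ξ0^ℓ)^2
      with hf'def
    have hfd : HasDerivAt f f' (Q ξ0) := by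
      have h1 : HasDerivAt (fun q : ℝ => 1 - (d:ℝ)*q) (-(d:ℝ)) (Q ξ0) := by
        simpa using ((hasDerivAt_id (Q ξ0)).const_mul (d:ℝ)).const_sub 1
      have h2 : HasDerivAt (fun q : ℝ => q^ℓ) ((ℓ:ℝ) * Q ξ0^(ℓ-1)) (Q ξ0) := by
        simpa using hasDerivAt_pow ℓ (Q ξ0)
      exact h1.div h2 (pow_pos hq0pos ℓ).ne'
    have hfd0 : f' ≠ 0 := by
      have e1 : 0 < Q ξ0^ℓ := pow_pos hq0pos ℓ
      have e2 : 0 < Q ξ0^(ℓ-1) := pow_pos hq0pos _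
      have e3 : 0 < 1 - (d:ℝ)*Q ξ0 := by
        have := (lt_div_iff₀ hD0).mp hq0lt
        linarith
      have hnum : -(d:ℝ) * Q ξ0^ℓ - (1 - (d:ℝ)*Q ξ0) * ((ℓ:ℝ) * Q ξ0^(ℓ-1)) < 0 := by
        nlinarith [mul_pos (mul_pos e3 hL0) e2]
      have hden : 0 < (Q ξ0^ℓ)^2 := by positivity
      rw [hf'def]
      exact ne_of_lt (div_neg_of_neg_of_pos hnum hden)
    have hx0pos : 0 < c * ξ0^(2*ℓ) := by positivity
    set g : ℝ → ℝ := fun x => Q ((x/c) ^ (((2*ℓ : ℕ) : ℝ))⁻¹) with hg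
    have hroot : ((c * ξ0^(2*ℓ))/c) ^ (((2*ℓ : ℕ) : ℝ))⁻¹ = ξ0 := by
      rw [mul_div_cancel_left₀ _ hc.ne']
      exact Real.pow_rpow_inv_natCast hξ0.le h2ℓ
    have hgx0 : g (c * ξ0^(2*ℓ)) = Q ξ0 := by rw [hg]; simp only; rw [hroot]
    have hgcont : ContinuousAt g (c * ξ0^(2*ℓ)) := by
      have h1 : ContinuousAt (fun x : ℝ => (x/c) ^ (((2*ℓ : ℕ) : ℝ))⁻¹) (c * ξ0^(2*ℓ)) := by
        apply ContinuousAt.rpow_const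
        · exact (continuous_id.div_const c).continuousAt
        · left
          positivity
      have h2 := hQcont ξ0 hξ0
      rw [← hroot] at h2
      exact ContinuousAt.comp h2 h1
    have hfg : ∀ᶠ x in nhds (c * ξ0^(2*ℓ)), f (g x) = x := by
      filter_upwards [Ioi_mem_nhds hx0pos] with x hx
      have hx' : (0:ℝ) < x := hx
      have hxc : 0 < x/c := div_pos hx' hc
      set ζ := (x/c) ^ (((2*ℓ : ℕ) : ℝ))⁻¹ with hζ
      have hζnn : 0 ≤ ζ := Real.rpow_nonneg hxc.le _
      have hpow : ζ ^ (2*ℓ) = x/c := Real.rpow_inv_natCast_pow hxc.le h2ℓ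
      have h := hQeq ζ hζnn
      rw [hpow] at h
      have : c * (x/c) = x := by field_simp
      rw [this] at h
      exact h.symm
    have hginv : HasDerivAt g f'⁻¹ (c * ξ0^(2*ℓ)) := by
      apply HasDerivAt.of_local_left_inverse hgcont ?_ hfd0 hfg
      rw [hgx0]; exact hfd
    have hh : HasDerivAt (fun ξ : ℝ => c * ξ^(2*ℓ)) (c * (((2*ℓ:ℕ):ℝ) * ξ0^(2*ℓ-1))) ξ0 :=
      (hasDerivAt_pow (2*ℓ) ξ0).const_mul c
    have hcomp : HasDerivAt (fun ξ : ℝ => g (c * ξ^(2*ℓ)))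
        (f'⁻¹ * (c * (((2*ℓ:ℕ):ℝ) * ξ0^(2*ℓ-1)))) ξ0 := HasDerivAt.comp (h₂ := g) (h := fun ξ : ℝ => c * ξ^(2*ℓ)) ξ0 hginv hh
    have heq : Q =ᶠ[nhds ξ0] (fun ξ : ℝ => g (c * ξ^(2*ℓ))) := by
      filter_upwards [Ioi_mem_nhds hξ0] with ξ hξ
      have hξ' : (0:ℝ) < ξ := hξ
      rw [hg]
      simp only
      rw [mul_div_cancel_left₀ _ hc.ne', Real.pow_rpow_inv_natCast hξ'.le h2ℓ]
    exact (hcomp.congr_of_eventuallyEq heq).differentiableAt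
  -- the derivative identity
  have hE : ∀ ξ0 : ℝ, 0 < ξ0 →
      c * (((2*ℓ:ℕ):ℝ) * ξ0^(2*ℓ-1)) * Q ξ0^ℓ
        + c * ξ0^(2*ℓ) * ((ℓ:ℝ) * Q ξ0^(ℓ-1) * deriv Q ξ0)
        + (d:ℝ) * deriv Q ξ0 = 0 := by
    intro ξ0 hξ0
    have hQ' : HasDerivAt Q (deriv Q ξ0) ξ0 := (hdiff ξ0 hξ0).hasDerivAt
    have hH : HasDerivAt (fun ξ : ℝ => c * ξ^(2*ℓ) * Q ξ^ℓ + (d:ℝ) * Q ξ - 1)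
        (c * (((2*ℓ:ℕ):ℝ) * ξ0^(2*ℓ-1)) * Q ξ0^ℓ
          + c * ξ0^(2*ℓ) * ((ℓ:ℝ) * Q ξ0^(ℓ-1) * deriv Q ξ0)
          + (d:ℝ) * deriv Q ξ0) ξ0 := by
      exact ((((hasDerivAt_pow (2*ℓ) ξ0).const_mul c).mul (hQ'.pow ℓ)).add
        (hQ'.const_mul (d:ℝ))).sub_const 1
    have heq : (fun ξ : ℝ => c * ξ^(2*ℓ) * Q ξ^ℓ + (d:ℝ) * Q ξ - 1) =ᶠ[nhds ξ0]
        (fun _ : ℝ => (0:ℝ)) := by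
      filter_upwards [Ioi_mem_nhds hξ0] with ξ hξ
      have hξ' : (0:ℝ) < ξ := hξ
      have := hQrel ξ hξ'.le
      linarith
    have h0 : HasDerivAt (fun _ : ℝ => (0:ℝ))
        (c * (((2*ℓ:ℕ):ℝ) * ξ0^(2*ℓ-1)) * Q ξ0^ℓ
          + c * ξ0^(2*ℓ) * ((ℓ:ℝ) * Q ξ0^(ℓ-1) * deriv Q ξ0)
          + (d:ℝ) * deriv Q ξ0) ξ0 := hH.congr_of_eventuallyEq heq.symm
    exact h0.unique (hasDerivAt_const ξ0 0)
  -- cleaned-up derivative identity (with split powers)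
  have hE2 : ∀ ξ0 : ℝ, 0 < ξ0 →
      c * 2 * (ℓ:ℝ) * ξ0^(2*ℓ-1) * Q ξ0 * Q ξ0^(ℓ-1)
        + (c * ξ0 * ξ0^(2*ℓ-1) * (ℓ:ℝ) * Q ξ0^(ℓ-1) + (d:ℝ)) * deriv Q ξ0 = 0 := by
    intro ξ0 hξ0
    have h := hE ξ0 hξ0
    have hs1 : ξ0^(2*ℓ) = ξ0 * ξ0^(2*ℓ-1) := by
      conv_lhs => rw [show 2*ℓ = (2*ℓ-1)+1 by omega]
      rw [pow_succ']
    have hs2 : Q ξ0^ℓ = Q ξ0 * Q ξ0^(ℓ-1) := by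
      conv_lhs => rw [show ℓ = (ℓ-1)+1 by omega]
      rw [pow_succ']
    rw [hs1, hs2] at h
    push_cast at h
    linear_combination h
  -- derivative is negative
  have hderivneg : ∀ ξ0 : ℝ, 0 < ξ0 → deriv Q ξ0 < 0 := by
    intro ξ0 hξ0
    obtain ⟨hq0pos, hq0lt⟩ := hrange ξ0 hξ0
    have hX : (0:ℝ) < ξ0^(2*ℓ-1) := pow_pos hξ0 _
    have hP : (0:ℝ) < Q ξ0^(ℓ-1) := pow_pos hq0pos _
    have ht : (0:ℝ) < c * 2 * (ℓ:ℝ) * ξ0^(2*ℓ-1) * Q ξ0 * Q ξ0^(ℓ-1) := by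
      have := mul_pos (mul_pos (mul_pos (mul_pos (mul_pos hc two_pos) hL0) hX) hq0pos) hP
      linarith
    have hco : (0:ℝ) < c * ξ0 * ξ0^(2*ℓ-1) * (ℓ:ℝ) * Q ξ0^(ℓ-1) + (d:ℝ) := by
      have := mul_pos (mul_pos (mul_pos (mul_pos hc hξ0) hX) hL0) hP
      linarith
    have h := hE2 ξ0 hξ0
    by_contra hcon
    push_neg at hcon
    have := mul_nonneg hco.le hcon
    linarith
  -- the ODE
  have hODE : ∀ ξ0 : ℝ, 0 < ξ0 →
      (d:ℝ) * Q ξ0 * (Q ξ0 - 1/(d:ℝ)) + (Q ξ0 - 1/2) * ξ0 * deriv Q ξ0 = 0 := by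
    intro ξ0 hξ0
    obtain ⟨hq0pos, _⟩ := hrange ξ0 hξ0
    have hrel' : c * (ξ0 * ξ0^(2*ℓ-1)) * (Q ξ0 * Q ξ0^(ℓ-1)) = 1 - (d:ℝ) * Q ξ0 := by
      have h := hQrel ξ0 hξ0.le
      have hs1 : ξ0^(2*ℓ) = ξ0 * ξ0^(2*ℓ-1) := by
        conv_lhs => rw [show 2*ℓ = (2*ℓ-1)+1 by omega]
        rw [pow_succ']
      have hs2 : Q ξ0^ℓ = Q ξ0 * Q ξ0^(ℓ-1) := by
        conv_lhs => rw [show ℓ = (ℓ-1)+1 by omega]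
        rw [pow_succ']
      rw [hs1, hs2] at h
      exact h
    have h := hE2 ξ0 hξ0
    have hD1 : (d:ℝ) * (1/(d:ℝ)) = 1 := mul_one_div_cancel hD0.ne'
    have h2L : 2 * (ℓ:ℝ) * ((d:ℝ) * Q ξ0^2 - Q ξ0 + (Q ξ0 - 1/2) * ξ0 * deriv Q ξ0) = 0 := by
      linear_combination (-(ξ0 * Q ξ0)) * h
        + (2 * (ℓ:ℝ) * Q ξ0 + (ℓ:ℝ) * ξ0 * deriv Q ξ0) * hrel'
        - (Q ξ0 * ξ0 * deriv Q ξ0) * hde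
    have hT : (d:ℝ) * Q ξ0^2 - Q ξ0 + (Q ξ0 - 1/2) * ξ0 * deriv Q ξ0 = 0 := by
      rcases mul_eq_zero.mp h2L with h' | h'
      · exfalso; have : (0:ℝ) < 2 * (ℓ:ℝ) := by linarith
        linarith [this.ne' h']
      · exact h'
    linear_combination hT - Q ξ0 * hD1
  -- decay at infinity
  have htend : Tendsto Q atTop (nhds 0) := by
    rw [tendsto_order]
    constructor
    · intro a ha
      filter_upwards [eventually_ge_atTop (0:ℝ)] with ξ hξ
      exact lt_of_lt_of_le ha (hQpos ξ hξ).le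
    · intro a ha
      obtain ⟨ξa, hξa, hQa⟩ := hsurj (min a (1/(d:ℝ)))
        ⟨lt_min ha (by positivity), min_le_right _ _⟩
      filter_upwards [eventually_gt_atTop ξa] with ξ hξ
      have hlt := hQanti ξa ξ hξa hξ
      rw [hQa] at hlt
      exact lt_of_lt_of_le hlt (min_le_left _ _)
  exact ⟨hb, fun ξ hξ => ⟨hdiff ξ hξ, hderivneg ξ hξ⟩, hrange, htend, hODE⟩

/-- Definition and basic properties of the blowup profile `Q`: existence and uniqueness of
`Q(ξ) ∈ (0,1/d]` with `c ξ^{2ℓ} = (1 − dQ)/Q^ℓ`, the value `Q(0) = 1/d`, strict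
monotonicity (`Q' < 0` on `(0,∞)`), decay at infinity, and the profile ODE. -/
theorem profile_Q_properties
    (d : ℕ) (hd : d = 3 ∨ d = 4)
    (ℓ : ℕ) (hℓ : ℓ = d / (d - 2))
    (c : ℝ) (hc : 0 < c) :
    (∀ ξ : ℝ, 0 ≤ ξ → ∃! q : ℝ,
      q ∈ Set.Ioc 0 (1 / (d : ℝ)) ∧ c * ξ ^ (2 * ℓ) = (1 - (d : ℝ) * q) / q ^ ℓ) ∧
    (∀ Q : ℝ → ℝ,
      (∀ ξ : ℝ, 0 ≤ ξ → Q ξ ∈ Set.Ioc 0 (1 / (d : ℝ)) ∧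
        c * ξ ^ (2 * ℓ) = (1 - (d : ℝ) * Q ξ) / Q ξ ^ ℓ) →
      -- (b) Q(0) = 1/d
      Q 0 = 1 / (d : ℝ) ∧
      -- (c) differentiability and strict decrease on (0,∞)
      (∀ ξ : ℝ, 0 < ξ → DifferentiableAt ℝ Q ξ ∧ deriv Q ξ < 0) ∧
      (∀ ξ : ℝ, 0 < ξ → 0 < Q ξ ∧ Q ξ < 1 / (d : ℝ)) ∧
      -- (d) decay at infinity
      Tendsto Q atTop (nhds 0) ∧
      -- (e) the profile ODE
      (∀ ξ : ℝ, 0 < ξ →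
        (d : ℝ) * Q ξ * (Q ξ - 1 / (d : ℝ)) + (Q ξ - 1 / 2) * ξ * deriv Q ξ = 0)) := by
  rcases hd with h | h <;> subst h <;> norm_num at hℓ <;> subst hℓ
  · exact aux_profile 3 3 (by norm_num) (by norm_num) (by norm_num) c hc
  · exact aux_profile 4 2 (by norm_num) (by norm_num) (by norm_num) c hc
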